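/- For star bodies K, L in R^n (n ≥ 3), the dual mixed volume satisfies the Minkowski-type inequality Ṽ_{-1}(K,L)^n ≥ V(K)^{n+1} V(L)^{-1}, with equality if and only if K and L are dilates. -/

import Mathlib

open MeasureTheory Metric
open scoped RealInnerProductSpace

noncomputable section

/-- Euclidean space ℝⁿ. -/
abbrev Euc (n : ℕ) := EuclideanSpace ℝ (Fin n)

/-- The unit sphere S^{n-1} ⊂ ℝⁿ. -/
abbrev Sph (n : ℕ) := Metric.sphere (0 : Euc n) 1

/-- Spherical Lebesgue measure on S^{n-1}. -/
def sphMeasure (n : ℕ) [NeZero n] : Measure (Sph n) := volume.toSphere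

/-- A star body (with respect to the origin) in ℝⁿ, described by its continuous
positive radial function on the unit sphere. -/
structure StarBody (n : ℕ) where
  radial : C(Sph n, ℝ)
  pos : ∀ u, 0 < radial u

/-- The dual mixed volume Ṽ_r(K,L) = (1/n) ∫_{S^{n-1}} ρ(K,u)^{n-r} ρ(L,u)^r du. -/
def dualMixedVolR (n : ℕ) [NeZero n] (r : ℝ) (K L : StarBody n) : ℝ :=
  (1 / n : ℝ) * ∫ u, K.radial u ^ ((n : ℝ) - r) * L.radial u ^ r ∂(sphMeasure n)

/-- The volume of a star body, V(K) = (1/n) ∫ ρ(K,u)^n du. -/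
def StarBody.vol (n : ℕ) [NeZero n] (K : StarBody n) : ℝ :=
  (1 / n : ℝ) * ∫ u, K.radial u ^ (n : ℕ) ∂(sphMeasure n)

/-- Two star bodies are dilates if their radial functions are proportional. -/
def Dilates (n : ℕ) (K L : StarBody n) : Prop :=
  ∃ c : ℝ, 0 < c ∧ ∀ u, K.radial u = c * L.radial u

/-! ### Auxiliary lemmas -/

open scoped Pointwise

instance sphMeasure_finite (n : ℕ) [NeZero n] : IsFiniteMeasure (sphMeasure n) := by
  unfold sphMeasure; infer_instance

/-- The spherical measure is positive on nonempty open sets. -/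
lemma sphMeasure_open_pos (n : ℕ) [NeZero n] {U : Set (Sph n)} (hU : IsOpen U)
    (hne : U.Nonempty) : sphMeasure n U ≠ 0 := by
  obtain ⟨W, hW, hUW⟩ := isOpen_induced_iff.1 hU
  rw [sphMeasure, Measure.toSphere_apply' _ hU.measurableSet]
  set S : Set (Euc n) := Set.Ioo (0 : ℝ) 1 • ((↑) '' U) with hS
  have hcont : ContinuousOn (fun x : Euc n => ‖x‖⁻¹ • x) ({0}ᶜ) :=
    (continuous_norm.continuousOn.inv₀ fun x hx => norm_ne_zero_iff.2 hx).smul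
      continuous_id.continuousOn
  have hopen2 : IsOpen ({(0 : Euc n)}ᶜ ∩ (fun x : Euc n => ‖x‖⁻¹ • x) ⁻¹' W) :=
    hcont.isOpen_inter_preimage isOpen_compl_singleton hW
  set V : Set (Euc n) :=
    Metric.ball 0 1 ∩ ({(0 : Euc n)}ᶜ ∩ (fun x : Euc n => ‖x‖⁻¹ • x) ⁻¹' W) with hV
  have hVopen : IsOpen V := Metric.isOpen_ball.inter hopen2
  -- V is nonempty
  obtain ⟨u₀, hu₀⟩ := hne
  have hu₀W : (u₀ : Euc n) ∈ W := by rw [← hUW] at hu₀; exact hu₀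
  have hu₀n : ‖(u₀ : Euc n)‖ = 1 := mem_sphere_zero_iff_norm.1 u₀.2
  have hVne : V.Nonempty := by
    refine ⟨(2⁻¹ : ℝ) • (u₀ : Euc n), ?_, ?_, ?_⟩
    · rw [mem_ball_zero_iff, norm_smul, hu₀n]
      norm_num
    · simp only [Set.mem_compl_iff, Set.mem_singleton_iff]
      intro h
      have h2 : ‖(2⁻¹ : ℝ) • (u₀ : Euc n)‖ = 0 := by rw [h, norm_zero]
      rw [norm_smul, hu₀n] at h2
      norm_num at h2
    · have hns : ‖(2⁻¹ : ℝ) • (u₀ : Euc n)‖ = 2⁻¹ := by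
        rw [norm_smul, hu₀n]; norm_num
      simp only [Set.mem_preimage, hns, smul_smul]
      norm_num
      exact hu₀W
  -- V ⊆ S
  have hVS : V ⊆ S := by
    rintro x ⟨hball, hx0, hxW⟩
    have hx0' : x ≠ 0 := hx0
    have hnx : 0 < ‖x‖ := norm_pos_iff.2 hx0'
    have hy1 : ‖‖x‖⁻¹ • x‖ = 1 := by
      rw [norm_smul, norm_inv, norm_norm, inv_mul_cancel₀ hnx.ne']
    refine Set.mem_smul.2 ⟨‖x‖, ⟨hnx, mem_ball_zero_iff.1 hball⟩,
      ‖x‖⁻¹ • x, ⟨⟨‖x‖⁻¹ • x, mem_sphere_zero_iff_norm.2 hy1⟩, ?_, rfl⟩, ?_⟩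
    · rw [← hUW]; exact hxW
    · rw [smul_smul, mul_inv_cancel₀ hnx.ne', one_smul]
  have hvol : volume S ≠ 0 := by
    intro h
    have h1 : (0 : ENNReal) < volume V := hVopen.measure_pos volume hVne
    have h2 : volume V ≤ volume S := measure_mono hVS
    rw [h] at h2
    exact absurd (le_antisymm h2 zero_le) h1.ne'
  have hdim : ((Module.finrank ℝ (Euc n) : ℕ) : ENNReal) ≠ 0 := by
    simp only [Ne, Nat.cast_eq_zero]
    rw [finrank_euclideanSpace_fin]
    exact NeZero.ne n
  exact mul_ne_zero hdim hvol

lemma integrable_sph (n : ℕ) [NeZero n] {f : Sph n → ℝ} (hf : Continuous f) :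
    Integrable f (sphMeasure n) :=
  hf.integrable_of_hasCompactSupport (HasCompactSupport.of_compactSpace _)

lemma sphere_nonempty' (n : ℕ) [NeZero n] : Nonempty (Sph n) := by
  have h : (Metric.sphere (0 : Euc n) 1).Nonempty :=
    NormedSpace.sphere_nonempty.2 zero_le_one
  exact h.to_subtype

lemma integral_sph_pos (n : ℕ) [NeZero n] {f : Sph n → ℝ} (hf : Continuous f)
    (hpos : ∀ u, 0 < f u) : 0 < ∫ u, f u ∂(sphMeasure n) := by
  rw [integral_pos_iff_support_of_nonneg (fun u => (hpos u).le) (integrable_sph n hf)]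
  have hsupp : Function.support f = Set.univ :=
    Set.eq_univ_of_forall fun u => (hpos u).ne'
  rw [hsupp]
  have : Nonempty (Sph n) := sphere_nonempty' n
  exact (sphMeasure_open_pos n isOpen_univ Set.univ_nonempty).bot_lt

/-- The key Hölder-type inequality with equality case. -/
lemma key_ineq (n : ℕ) (hn : 3 ≤ n) [NeZero n] (K L : StarBody n) :
    (∫ u, K.radial u ^ (n : ℕ) ∂(sphMeasure n)) ^ (n + 1) ≤
      (∫ u, K.radial u ^ ((n : ℕ) + 1) * (L.radial u)⁻¹ ∂(sphMeasure n)) ^ n *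
        (∫ u, L.radial u ^ (n : ℕ) ∂(sphMeasure n)) ∧
    ((∫ u, K.radial u ^ (n : ℕ) ∂(sphMeasure n)) ^ (n + 1) =
      (∫ u, K.radial u ^ ((n : ℕ) + 1) * (L.radial u)⁻¹ ∂(sphMeasure n)) ^ n *
        (∫ u, L.radial u ^ (n : ℕ) ∂(sphMeasure n)) ↔ Dilates n K L) := by
  have hn0 : (0 : ℝ) < n := Nat.cast_pos.2 (Nat.pos_of_ne_zero (NeZero.ne n))
  have hnne : n ≠ 0 := NeZero.ne n
  set σ := sphMeasure n with hσ
  set A := ∫ u, K.radial u ^ ((n : ℕ) + 1) * (L.radial u)⁻¹ ∂σ with hA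
  set B := ∫ u, K.radial u ^ (n : ℕ) ∂σ with hB
  set C := ∫ u, L.radial u ^ (n : ℕ) ∂σ with hC
  have hfc : Continuous fun u => K.radial u := K.radial.continuous
  have hgc : Continuous fun u => L.radial u := L.radial.continuous
  have hBpos : 0 < B := integral_sph_pos n (hfc.pow _) fun u => pow_pos (K.pos u) _
  have hCpos : 0 < C := integral_sph_pos n (hgc.pow _) fun u => pow_pos (L.pos u) _
  -- Dilates implies equality, by direct computation
  have hdil_eq : Dilates n K L → B ^ (n + 1) = A ^ n * C := by
    rintro ⟨c, hc, hcf⟩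
    have hA' : A = c ^ (n + 1) * C := by
      rw [hA, hC, ← integral_const_mul]
      refine integral_congr_ae (Filter.Eventually.of_forall fun u => ?_)
      show K.radial u ^ ((n : ℕ) + 1) * (L.radial u)⁻¹ = c ^ (n + 1) * L.radial u ^ (n : ℕ)
      rw [hcf u]
      have hgne := (L.pos u).ne'
      field_simp
      ring
    have hB' : B = c ^ n * C := by
      rw [hB, hC, ← integral_const_mul]
      refine integral_congr_ae (Filter.Eventually.of_forall fun u => ?_)
      show K.radial u ^ (n : ℕ) = c ^ n * L.radial u ^ (n : ℕ)
      rw [hcf u, mul_pow]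
    rw [hA', hB', mul_pow, mul_pow, ← pow_mul, ← pow_mul]
    ring
  -- Set up Jensen's inequality with respect to the measure with density ρ_L^n
  set w : Sph n → NNReal := fun u => Real.toNNReal (L.radial u ^ (n : ℕ)) with hwdef
  have hwmeas : Measurable w := (hgc.pow _).measurable.real_toNNReal
  set μ : Measure (Sph n) := σ.withDensity fun u => ((w u : NNReal) : ENNReal) with hμ
  have hcoe : (fun u => ((w u : NNReal) : ENNReal))
      = fun u => ENNReal.ofReal (L.radial u ^ (n : ℕ)) := rfl
  haveI hfin : IsFiniteMeasure μ := by
    rw [hμ]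
    refine isFiniteMeasure_withDensity ?_
    rw [hcoe]
    exact (integrable_sph n (hgc.pow _)).lintegral_lt_top.ne
  set F : Sph n → ℝ := fun u => (K.radial u / L.radial u) ^ (n : ℕ) with hFdef
  have hFc : Continuous F := (hfc.div hgc fun u => (L.pos u).ne').pow _
  have hFpos : ∀ u, 0 < F u := fun u => pow_pos (div_pos (K.pos u) (L.pos u)) _
  set p : ℝ := ((n : ℝ) + 1) / n with hp
  have hp1 : 1 < p := by
    rw [hp, lt_div_iff₀ hn0]
    linarith
  have hp0 : 0 < p := lt_trans one_pos hp1
  have hGF : ∀ u, F u ^ p = (K.radial u / L.radial u) ^ ((n : ℕ) + 1) := by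
    intro u
    have ht : (0 : ℝ) ≤ K.radial u / L.radial u := le_of_lt (div_pos (K.pos u) (L.pos u))
    show ((K.radial u / L.radial u) ^ (n : ℕ) : ℝ) ^ p
      = (K.radial u / L.radial u) ^ ((n : ℕ) + 1)
    rw [← Real.rpow_natCast (K.radial u / L.radial u) n, ← Real.rpow_mul ht,
      show (n : ℝ) * p = (((n : ℕ) + 1 : ℕ) : ℝ) by rw [hp]; push_cast; field_simp,
      Real.rpow_natCast]
  -- integrability
  have hFi : Integrable F μ := by
    rw [hμ, integrable_withDensity_iff_integrable_smul hwmeas]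
    have heq : (fun u => w u • F u) = fun u => L.radial u ^ (n : ℕ) * F u := by
      funext u
      have hnn : (0 : ℝ) ≤ L.radial u ^ (n : ℕ) := (pow_pos (L.pos u) _).le
      simp only [hwdef, NNReal.smul_def, Real.coe_toNNReal _ hnn, smul_eq_mul]
    rw [heq]
    exact integrable_sph n ((hgc.pow _).mul hFc)
  have hGFc : Continuous fun u => F u ^ p := by
    have heq : (fun u => F u ^ p) = fun u => (K.radial u / L.radial u) ^ ((n : ℕ) + 1) :=
      funext hGF
    rw [heq]
    exact (hfc.div hgc fun u => (L.pos u).ne').pow _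
  have hGFi : Integrable ((fun t : ℝ => t ^ p) ∘ F) μ := by
    rw [hμ, integrable_withDensity_iff_integrable_smul hwmeas]
    have heq : (fun u => w u • ((fun t : ℝ => t ^ p) ∘ F) u)
        = fun u => L.radial u ^ (n : ℕ) * F u ^ p := by
      funext u
      have hnn : (0 : ℝ) ≤ L.radial u ^ (n : ℕ) := (pow_pos (L.pos u) _).le
      simp only [hwdef, Function.comp_apply, NNReal.smul_def, Real.coe_toNNReal _ hnn, smul_eq_mul]
    rw [heq]
    exact integrable_sph n ((hgc.pow _).mul hGFc)
  -- the integrals with respect to μ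
  have hIF : ∫ u, F u ∂μ = B := by
    rw [hμ, integral_withDensity_eq_integral_smul hwmeas, hB]
    refine integral_congr_ae (Filter.Eventually.of_forall fun u => ?_)
    have hgne := (L.pos u).ne'
    have hnn : (0 : ℝ) ≤ L.radial u ^ (n : ℕ) := (pow_pos (L.pos u) _).le
    show w u • F u = K.radial u ^ (n : ℕ)
    simp only [hwdef, hFdef, NNReal.smul_def, Real.coe_toNNReal _ hnn, smul_eq_mul]
    rw [div_pow, mul_comm, div_mul_cancel₀ _ (pow_ne_zero _ hgne)]
  have hIGF : ∫ u, (fun t : ℝ => t ^ p) (F u) ∂μ = A := by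
    rw [hμ, integral_withDensity_eq_integral_smul hwmeas, hA]
    refine integral_congr_ae (Filter.Eventually.of_forall fun u => ?_)
    have hgne := (L.pos u).ne'
    have hnn : (0 : ℝ) ≤ L.radial u ^ (n : ℕ) := (pow_pos (L.pos u) _).le
    show w u • (fun t : ℝ => t ^ p) (F u) = K.radial u ^ ((n : ℕ) + 1) * (L.radial u)⁻¹
    show w u • F u ^ p = K.radial u ^ ((n : ℕ) + 1) * (L.radial u)⁻¹
    rw [hGF u]
    simp only [hwdef, NNReal.smul_def, Real.coe_toNNReal _ hnn, smul_eq_mul]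
    rw [div_pow]
    field_simp
    ring
  have hmass : (μ Set.univ).toReal = C := by
    rw [hμ, withDensity_apply _ MeasurableSet.univ, Measure.restrict_univ, hcoe, hC,
      integral_eq_lintegral_of_nonneg_ae (Filter.Eventually.of_forall fun u =>
        ((pow_pos (L.pos u) (n : ℕ)).le : (0 : ℝ) ≤ L.radial u ^ (n : ℕ)))
        ((hgc.pow _).aestronglyMeasurable)]
  have havgF : ⨍ u, F u ∂μ = C⁻¹ * B := by
    rw [average_eq, hIF, measureReal_def, hmass, smul_eq_mul]
  have havgGF : ⨍ u, (fun t : ℝ => t ^ p) (F u) ∂μ = C⁻¹ * A := by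
    rw [average_eq, hIGF, measureReal_def, hmass, smul_eq_mul]
  have hmem : ∀ᵐ u ∂μ, F u ∈ Set.Ici (0 : ℝ) :=
    Filter.Eventually.of_forall fun u => (hFpos u).le
  have hGcont : ContinuousOn (fun t : ℝ => t ^ p) (Set.Ici 0) := fun x _ =>
    (Real.continuousAt_rpow_const x p (Or.inr hp0.le)).continuousWithinAt
  rcases (strictConvexOn_rpow hp1).ae_eq_const_or_map_average_lt hGcont isClosed_Ici hmem
      hFi hGFi with hconst | hlt
  · -- case: F is a.e. constant; then K, L are dilates and equality holds
    have hnull := ae_iff.1 hconst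
    simp only [Function.const_apply] at hnull
    have hopen : IsOpen {u : Sph n | ¬F u = ⨍ x, F x ∂μ} := by
      have hset : {u : Sph n | ¬F u = ⨍ x, F x ∂μ} = F ⁻¹' {(⨍ x, F x ∂μ)}ᶜ := by
        ext u; simp
      rw [hset]
      exact isOpen_compl_singleton.preimage hFc
    have hσnull : σ {u : Sph n | ¬F u = ⨍ x, F x ∂μ} = 0 := by
      rw [hμ, withDensity_apply_eq_zero hwmeas.coe_nnreal_ennreal] at hnull
      have hset : {x : Sph n | (fun u => ((w u : NNReal) : ENNReal)) x ≠ 0} = Set.univ := by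
        refine Set.eq_univ_of_forall fun u => ?_
        simp only [Set.mem_setOf_eq, Ne, ENNReal.coe_eq_zero]
        rw [hwdef]
        simp only [Real.toNNReal_eq_zero, not_le]
        exact pow_pos (L.pos u) _
      rw [hset, Set.univ_inter] at hnull
      exact hnull
    have hempty : {u : Sph n | ¬F u = ⨍ x, F x ∂μ} = ∅ := by
      by_contra h
      exact sphMeasure_open_pos n hopen (Set.nonempty_iff_ne_empty.2 h) hσnull
    have hFconst : ∀ u, F u = ⨍ x, F x ∂μ := fun u =>
      not_not.1 (Set.eq_empty_iff_forall_notMem.1 hempty u)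
    obtain ⟨u₀⟩ := sphere_nonempty' n
    have hdil : Dilates n K L := by
      refine ⟨K.radial u₀ / L.radial u₀, div_pos (K.pos u₀) (L.pos u₀), fun u => ?_⟩
      have h1 : (K.radial u / L.radial u) ^ (n : ℕ)
          = (K.radial u₀ / L.radial u₀) ^ (n : ℕ) := by
        have e := (hFconst u).trans (hFconst u₀).symm
        simpa only [hFdef] using e
      have h2 : K.radial u / L.radial u = K.radial u₀ / L.radial u₀ :=
        (pow_left_strictMonoOn₀ hnne).injOn
          (le_of_lt (div_pos (K.pos u) (L.pos u)))
          (le_of_lt (div_pos (K.pos u₀) (L.pos u₀))) h1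
      rw [← h2, div_mul_cancel₀ _ (L.pos u).ne']
    exact ⟨le_of_eq (hdil_eq hdil), ⟨fun _ => hdil, fun _ => hdil_eq hdil⟩⟩
  · -- case: strict inequality
    rw [havgF, havgGF] at hlt
    have hlt' : (C⁻¹ * B) ^ p < C⁻¹ * A := hlt
    have hx : (0 : ℝ) ≤ C⁻¹ * B := (mul_pos (inv_pos.2 hCpos) hBpos).le
    have hstep : ((C⁻¹ * B) ^ p) ^ (n : ℕ) = (C⁻¹ * B) ^ (n + 1 : ℕ) := by
      rw [← Real.rpow_natCast ((C⁻¹ * B) ^ p) n, ← Real.rpow_mul hx,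
        show p * (n : ℝ) = ((n + 1 : ℕ) : ℝ) by rw [hp]; push_cast; field_simp,
        Real.rpow_natCast]
    have hlt2 : ((C⁻¹ * B) ^ p) ^ (n : ℕ) < (C⁻¹ * A) ^ (n : ℕ) :=
      pow_lt_pow_left₀ hlt' (Real.rpow_nonneg hx p) hnne
    rw [hstep] at hlt2
    have hlt3 : B ^ (n + 1) < A ^ n * C := by
      have h1 : (C⁻¹ * B) ^ (n + 1) * C ^ (n + 1) = B ^ (n + 1) := by
        calc (C⁻¹ * B) ^ (n + 1) * C ^ (n + 1)
            = B ^ (n + 1) * ((C ^ (n + 1))⁻¹ * C ^ (n + 1)) := by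
              rw [mul_pow, inv_pow]; ring
          _ = B ^ (n + 1) := by
              rw [inv_mul_cancel₀ (pow_ne_zero _ hCpos.ne'), mul_one]
      have h2 : (C⁻¹ * A) ^ n * C ^ (n + 1) = A ^ n * C := by
        calc (C⁻¹ * A) ^ n * C ^ (n + 1)
            = A ^ n * C * ((C ^ n)⁻¹ * C ^ n) := by
              rw [mul_pow, inv_pow, pow_succ]; ring
          _ = A ^ n * C := by
              rw [inv_mul_cancel₀ (pow_ne_zero _ hCpos.ne'), mul_one]
      calc B ^ (n + 1) = (C⁻¹ * B) ^ (n + 1) * C ^ (n + 1) := h1.symm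
        _ < (C⁻¹ * A) ^ n * C ^ (n + 1) :=
            mul_lt_mul_of_pos_right hlt2 (pow_pos hCpos _)
        _ = A ^ n * C := h2
    exact ⟨hlt3.le, ⟨fun he => absurd he hlt3.ne, fun hd => hdil_eq hd⟩⟩

theorem stmt4 (n : ℕ) (hn : 3 ≤ n) [NeZero n] (K L : StarBody n) :
    dualMixedVolR n (-1) K L ^ n ≥ StarBody.vol n K ^ (n + 1) * (StarBody.vol n L)⁻¹ ∧
    (dualMixedVolR n (-1) K L ^ n = StarBody.vol n K ^ (n + 1) * (StarBody.vol n L)⁻¹ ↔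
      Dilates n K L) := by
  have hn0 : (0 : ℝ) < n := Nat.cast_pos.2 (Nat.pos_of_ne_zero (NeZero.ne n))
  set σ := sphMeasure n
  set A := ∫ u, K.radial u ^ ((n : ℕ) + 1) * (L.radial u)⁻¹ ∂σ with hA
  set B := ∫ u, K.radial u ^ (n : ℕ) ∂σ with hB
  set C := ∫ u, L.radial u ^ (n : ℕ) ∂σ with hC
  have hBpos : 0 < B := integral_sph_pos n (K.radial.continuous.pow _)
    fun u => pow_pos (K.pos u) _
  have hCpos : 0 < C := integral_sph_pos n (L.radial.continuous.pow _)
    fun u => pow_pos (L.pos u) _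
  have hApos : 0 < A := integral_sph_pos n
    ((K.radial.continuous.pow _).mul (L.radial.continuous.inv₀ fun u => (L.pos u).ne'))
    fun u => mul_pos (pow_pos (K.pos u) _) (inv_pos.2 (L.pos u))
  -- rewrite the dual mixed volume
  have hdm : dualMixedVolR n (-1) K L = (1 / n : ℝ) * A := by
    rw [dualMixedVolR, hA]
    congr 1
    refine integral_congr_ae (Filter.Eventually.of_forall fun u => ?_)
    have h1 : ((n : ℝ) - (-1)) = ((n + 1 : ℕ) : ℝ) := by push_cast; ring
    simp only [h1, Real.rpow_natCast, Real.rpow_neg_one]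
  have hvK : StarBody.vol n K = (1 / n : ℝ) * B := rfl
  have hvL : StarBody.vol n L = (1 / n : ℝ) * C := rfl
  obtain ⟨hineq, hiff⟩ := key_ineq n hn K L
  rw [← hA, ← hB, ← hC] at hineq hiff
  have hnn : (0 : ℝ) < (n : ℝ) ^ n := pow_pos hn0 n
  rw [hdm, hvK, hvL]
  have hlhs : ((1 / n : ℝ) * A) ^ n = A ^ n / (n : ℝ) ^ n := by
    rw [mul_pow, div_pow, one_pow]; ring
  have hrhs : ((1 / n : ℝ) * B) ^ (n + 1) * ((1 / n : ℝ) * C)⁻¹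
      = B ^ (n + 1) / ((n : ℝ) ^ n * C) := by
    rw [mul_pow, mul_inv, div_pow, one_pow]
    field_simp
    ring
  rw [hlhs, hrhs]
  constructor
  · rw [ge_iff_le, div_le_div_iff₀ (mul_pos hnn hCpos) hnn]
    calc B ^ (n + 1) * (n : ℝ) ^ n ≤ (A ^ n * C) * (n : ℝ) ^ n :=
          mul_le_mul_of_nonneg_right hineq hnn.le
      _ = A ^ n * ((n : ℝ) ^ n * C) := by ring
  · rw [div_eq_div_iff hnn.ne' (mul_pos hnn hCpos).ne', ← hiff]
    constructor
    · intro h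
      have h2 : B ^ (n + 1) * (n : ℝ) ^ n = (A ^ n * C) * (n : ℝ) ^ n := by
        rw [← h]; ring
      exact mul_right_cancel₀ hnn.ne' h2
    · intro h
      rw [h]; ring
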